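/- arXiv:1411.7493 — 5 statements merged into one kernel-verified Lean document; each statement's English description precedes it below -/
import Mathlib

section
/- Let w be a coset leader of a linear code C ⊆ F_q^n and let y be obtained from w by subtracting one nonzero 'unit' of its generalized support (i.e., w = y + β^{j-1}e_i where the (i,j) entry of the p-adic expansion of w is nonzero and the representation y is in standard form). Then w_H(y) ≤ w_H(y + C) + 1, where w_H(y + C) denotes the minimum Hamming weight in the coset y + C. -/
open Finset Set

variable {p m n : ℕ} [Fact p.Prime] {K : Type} [Field K] [Fintype K] [DecidableEq K]
  [Algebra (ZMod p) K]

/-- Hamming weight -/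
def hw (v : Fin n → K) : ℕ := (Finset.univ.filter fun i => v i ≠ 0).card

/-- Hamming distance -/
def dH (x y : Fin n → K) : ℕ := hw (x - y)

/-- Hamming distance from a word to a set of words -/
noncomputable def dHSet (A : Set (Fin n → K)) (y : Fin n → K) : ℕ := sInf ((dH y) '' A)

/-- y is a coset leader: minimal Hamming weight in its coset -/
def isCosetLeader (C : Submodule K (Fin n → K)) (y : Fin n → K) : Prop :=
  ∀ c ∈ C, hw y ≤ hw (y + c)

/-- the set of coset leaders -/
def CL (C : Submodule K (Fin n → K)) : Set (Fin n → K) := {y | isCosetLeader C y}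

/-- weight of the coset of y -/
noncomputable def cosetWt (C : Submodule K (Fin n → K)) (y : Fin n → K) : ℕ :=
  sInf (hw '' {z | z - y ∈ C})

/-- minimum distance of the code -/
noncomputable def dmin (C : Submodule K (Fin n → K)) : ℕ :=
  sInf (hw '' {c | c ∈ C ∧ c ≠ 0})

/-- covering radius -/
noncomputable def covRad (C : Submodule K (Fin n → K)) : ℕ :=
  sSup (Set.range fun y => dHSet (C : Set (Fin n → K)) y)

/-- Voronoi region of a codeword -/
def VorD (C : Submodule K (Fin n → K)) (c : Fin n → K) : Set (Fin n → K) :=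
  {y | ∀ c' ∈ C, dH y c ≤ dH y c'}

/-- words at Hamming distance exactly one from A -/
def XB (A : Set (Fin n → K)) : Set (Fin n → K) := {y | dHSet A y = 1}

/-- boundary of a set of words -/
def bdry (A : Set (Fin n → K)) : Set (Fin n → K) := XB A ∪ XB Aᶜ

/-- canonical generator e_{ij} = β^{j-1} e_i -/
def eGen (β : K) (i : Fin n) (j : Fin m) : Fin n → K := Pi.single i (β ^ (j : ℕ))

/-- leader codeword -/
def isLeaderCodeword (C : Submodule K (Fin n → K)) (b : Module.Basis (Fin m) (ZMod p) K)
    (β : K) (w : Fin n → K) : Prop :=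
  w ≠ 0 ∧ w ∈ C ∧ ∃ (n₁ n₂ : Fin n → K) (i : Fin n) (j : Fin m),
    w = n₁ + eGen β i j - n₂ ∧
    (b.repr ((n₁ + eGen β i j) i) j).val = (b.repr (n₁ i) j).val + 1 ∧
    isCosetLeader C n₂ ∧ dHSet (CL C) n₁ ≤ 1 ∧ dHSet (CL C) (n₁ + eGen β i j) ≤ 1

/-- correctable errors: minimal element of each coset w.r.t. the order r -/
def E0 (C : Submodule K (Fin n → K)) (r : (Fin n → K) → (Fin n → K) → Prop) :
    Set (Fin n → K) := {y | ∀ z, z - y ∈ C → z ≠ y → r y z}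

/-- uncorrectable errors -/
def E1 (C : Submodule K (Fin n → K)) (r : (Fin n → K) → (Fin n → K) → Prop) :
    Set (Fin n → K) := (E0 C r)ᶜ

/-- H(y) = { c ∈ C : y - c ≺ y } -/
def Hset (C : Submodule K (Fin n → K)) (r : (Fin n → K) → (Fin n → K) → Prop)
    (y : Fin n → K) : Set (Fin n → K) := {c | c ∈ C ∧ r (y - c) y}

/-- u is a larger half of c -/
def isLargerHalf (r : (Fin n → K) → (Fin n → K) → Prop) (c u : Fin n → K) : Prop :=
  r (u - c) u ∧ ∀ u', r (u' - c) u' → ¬ r u' u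

/-- larger halves of elements of T -/
def LH (r : (Fin n → K) → (Fin n → K) → Prop) (T : Set (Fin n → K)) :
    Set (Fin n → K) := {u | ∃ c ∈ T, isLargerHalf r c u}

/-- x ⊂₁ y : componentwise F_p-coefficient containment with disjoint generalized
supports of x and y - x -/
def subset1 (b : Module.Basis (Fin m) (ZMod p) K) (x y : Fin n → K) : Prop :=
  (∀ (i : Fin n) (j : Fin m), (b.repr (x i) j).val ≤ (b.repr (y i) j).val) ∧
  ∀ (i : Fin n) (j : Fin m), b.repr (x i) j ≠ 0 → b.repr ((y - x) i) j = 0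

/-- minimal uncorrectable errors w.r.t. ⊂₁ -/
def M1 (C : Submodule K (Fin n → K)) (r : (Fin n → K) → (Fin n → K) → Prop)
    (b : Module.Basis (Fin m) (ZMod p) K) : Set (Fin n → K) :=
  {y | y ∈ E1 C r ∧ ∀ x, subset1 b x y → x ∈ E1 C r → x = y}

/-- trial set -/
def isTrialSet (C : Submodule K (Fin n → K)) (r : (Fin n → K) → (Fin n → K) → Prop)
    (T : Set (Fin n → K)) : Prop :=
  T ⊆ (C : Set (Fin n → K)) ∧ (0 : Fin n → K) ∉ T ∧
    ∀ y, y ∈ E0 C r ↔ ∀ c ∈ T, (y = y + c ∨ r y (y + c))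

theorem stmt3 (C : Submodule K (Fin n → K)) (b : Module.Basis (Fin m) (ZMod p) K) (β : K)
    (hβ : ∀ j : Fin m, b j = β ^ (j : ℕ))
    (w y : Fin n → K) (i : Fin n) (j : Fin m)
    (hleader : isCosetLeader C w)
    (hsum : w = y + eGen β i j)
    (hsf : (b.repr (w i) j).val = (b.repr (y i) j).val + 1) :
    hw y ≤ cosetWt C y + 1 := by
  have hwi : w i ≠ 0 := by
    intro h
    rw [h] at hsf
    simp at hsf
  have h1 : hw y ≤ hw w := by
    apply Finset.card_le_card
    intro k hk
    simp only [Finset.mem_filter, Finset.mem_univ, true_and] at hk ⊢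
    by_cases hki : k = i
    · subst hki; exact hwi
    · have hwk : w k = y k := by
        rw [hsum]; simp [eGen, Pi.single_eq_of_ne hki]
      rwa [hwk]
  obtain ⟨z, hzC, hzeq⟩ := Nat.sInf_mem
    (⟨hw y, y, by simp, rfl⟩ : (hw '' {z | z - y ∈ C}).Nonempty)
  have hc : z - y ∈ C := hzC
  have h2 : hw w ≤ hw (z + eGen β i j) := by
    have h := hleader (z - y) hc
    have heq : w + (z - y) = z + eGen β i j := by
      rw [hsum]; ring
    rwa [heq] at h
  have h3 : hw (z + eGen β i j) ≤ hw z + 1 := by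
    have hsub : (Finset.univ.filter fun k => (z + eGen β i j) k ≠ 0) ⊆
        insert i (Finset.univ.filter fun k => z k ≠ 0) := by
      intro k hk
      simp only [Finset.mem_filter, Finset.mem_univ, true_and, Finset.mem_insert] at hk ⊢
      by_cases hki : k = i
      · left; exact hki
      · right
        have hk' : (z + eGen β i j) k = z k := by
          simp [eGen, Pi.single_eq_of_ne hki]
        rwa [hk'] at hk
    calc hw (z + eGen β i j) ≤ (insert i (Finset.univ.filter fun k => z k ≠ 0)).card :=
          Finset.card_le_card hsub
      _ ≤ (Finset.univ.filter fun k => z k ≠ 0).card + 1 := Finset.card_insert_le _ _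
      _ = hw z + 1 := rfl
  unfold cosetWt
  omega
end

section
/- The set of leader codewords L(C) of a linear code C is a test set for C: for every y ∈ F_q^n, either y is a coset leader (y ∈ D(0)), or there exists v ∈ L(C) with w_H(y − v) < w_H(y). -/
open Finset Set

variable {p m n : ℕ} [Fact p.Prime] {K : Type} [Field K] [Fintype K] [DecidableEq K]
  [Algebra (ZMod p) K]

lemma hw_add_le (a c : Fin n → K) : hw (a + c) ≤ hw a + hw c := by
  unfold hw
  refine le_trans (Finset.card_le_card (fun k hk => ?_)) (Finset.card_union_le _ _)
  simp only [Finset.mem_filter, Finset.mem_union, Finset.mem_univ, true_and] at hk ⊢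
  by_contra h
  push_neg at h
  exact hk (by simp [Pi.add_apply, h.1, h.2])

lemma hw_le_one_of {x : Fin n → K} {i : Fin n} (h : ∀ k, k ≠ i → x k = 0) : hw x ≤ 1 := by
  unfold hw
  have hsub : (Finset.univ.filter fun k => x k ≠ 0) ⊆ {i} := by
    intro k hk
    simp only [Finset.mem_filter, Finset.mem_univ, true_and] at hk
    simp only [Finset.mem_singleton]
    by_contra hne
    exact hk (h k hne)
  simpa using Finset.card_le_card hsub

lemma zmod_val_succ {a : ZMod p} [Fact p.Prime] (ha : a ≠ 0) :
    a.val = (a - 1).val + 1 := by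
  haveI : NeZero p := ⟨(Fact.out : p.Prime).ne_zero⟩
  have h1 : a.val < p := ZMod.val_lt a
  have h0 : a.val ≠ 0 := by
    intro h
    exact ha ((ZMod.val_eq_zero a).mp h)
  have hcast : ((a.val : ℕ) : ZMod p) = a := ZMod.natCast_rightInverse a
  have hsub : a - 1 = ((a.val - 1 : ℕ) : ZMod p) := by
    rw [Nat.cast_sub (by omega : 1 ≤ a.val), hcast, Nat.cast_one]
  rw [hsub, ZMod.val_cast_of_lt (by omega)]
  omega

/-- the leader codewords form a test set. -/
theorem stmt8 (C : Submodule K (Fin n → K)) (b : Module.Basis (Fin m) (ZMod p) K) (β : K)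
    (hβ : ∀ j : Fin m, b j = β ^ (j : ℕ)) (y : Fin n → K) :
    isCosetLeader C y ∨ ∃ v : Fin n → K, isLeaderCodeword C b β v ∧
      hw (y - v) < hw y := by
  classical
  by_cases hy : isCosetLeader C y
  · exact Or.inl hy
  right
  -- restriction of y to a set of coordinates
  set yT : Finset (Fin n) → (Fin n → K) := fun T k => if k ∈ T then y k else 0 with hyTdef
  have hyuniv : yT Finset.univ = y := funext fun k => if_pos (Finset.mem_univ k)
  -- choose T of minimal cardinality with yT T not a coset leader
  set S : Finset (Finset (Fin n)) :=
    Finset.univ.filter (fun T => ¬ isCosetLeader C (yT T)) with hSdef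
  have hUS : Finset.univ ∈ S := by
    simp only [hSdef, Finset.mem_filter, Finset.mem_univ, true_and, hyuniv]
    exact hy
  obtain ⟨T, hTS, hTmin⟩ := S.exists_min_image Finset.card ⟨_, hUS⟩
  have hT : ¬ isCosetLeader C (yT T) := by
    simpa only [hSdef, Finset.mem_filter, Finset.mem_univ, true_and] using hTS
  -- every coordinate of T carries a nonzero entry of y
  have hyi : ∀ k ∈ T, y k ≠ 0 := by
    intro k hk hk0
    have heq : yT (T.erase k) = yT T := by
      funext l
      by_cases hl : l = k
      · subst hl
        simp [hyTdef, hk, hk0]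
      · simp [hyTdef, Finset.mem_erase, hl]
    have hmem : T.erase k ∈ S := by
      simp only [hSdef, Finset.mem_filter, Finset.mem_univ, true_and, heq]
      exact hT
    have := hTmin _ hmem
    have hlt : (T.erase k).card < T.card := Finset.card_erase_lt_of_mem hk
    omega
  -- T is nonempty
  have hzeroCL : isCosetLeader C (0 : Fin n → K) := by
    intro c _
    have : hw (0 : Fin n → K) = 0 := by simp [hw]
    omega
  have hTne : T.Nonempty := by
    rcases Finset.eq_empty_or_nonempty T with h | h
    · exfalso
      apply hT
      have : yT T = 0 := by
        funext k
        simp [hyTdef, h]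
      rw [this]
      exact hzeroCL
    · exact h
  obtain ⟨i, hiT⟩ := hTne
  have hyi0 : y i ≠ 0 := hyi i hiT
  -- the sub-restriction is a coset leader
  have hw'' : isCosetLeader C (yT (T.erase i)) := by
    by_contra h
    have hmem : T.erase i ∈ S := by
      simp only [hSdef, Finset.mem_filter, Finset.mem_univ, true_and]
      exact h
    have := hTmin _ hmem
    have hlt : (T.erase i).card < T.card := Finset.card_erase_lt_of_mem hiT
    omega
  -- choose j with nonzero coefficient
  have hrepr : b.repr (y i) ≠ 0 := by
    intro h
    exact hyi0 (b.repr.map_eq_zero_iff.mp h)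
  obtain ⟨j, hj⟩ : ∃ j, b.repr (y i) j ≠ 0 := by
    by_contra h
    push_neg at h
    exact hrepr (Finsupp.ext h)
  -- names
  set w' : Fin n → K := yT T with hw'def
  set w'' : Fin n → K := yT (T.erase i) with hw''def
  set e : Fin n → K := eGen β i j with hedef
  set n₁ : Fin n → K := w' - e with hn₁def
  have hn₁e : n₁ + e = w' := by
    rw [hn₁def]; abel
  -- coset leader n₂ of the coset of w'
  set Q : Finset (Fin n → K) := Finset.univ.filter (fun z => z - w' ∈ C) with hQdef
  have hw'Q : w' ∈ Q := by
    simp [hQdef, Submodule.zero_mem]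
  obtain ⟨n₂, hn₂Q, hn₂min⟩ := Q.exists_min_image hw ⟨w', hw'Q⟩
  have hn₂C : n₂ - w' ∈ C := by
    simpa [hQdef] using hn₂Q
  have hn₂CL : isCosetLeader C n₂ := by
    intro c hc
    refine hn₂min (n₂ + c) ?_
    simp only [hQdef, Finset.mem_filter, Finset.mem_univ, true_and]
    have : n₂ + c - w' = (n₂ - w') + c := by abel
    rw [this]
    exact C.add_mem hn₂C hc
  have hn₂lt : hw n₂ < hw w' := by
    unfold isCosetLeader at hT
    push_neg at hT
    obtain ⟨c, hcC, hclt⟩ := hT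
    have hmem : w' + c ∈ Q := by
      simp only [hQdef, Finset.mem_filter, Finset.mem_univ, true_and]
      have : w' + c - w' = c := by abel
      rw [this]; exact hcC
    exact lt_of_le_of_lt (hn₂min _ hmem) hclt
  -- the leader codeword
  refine ⟨w' - n₂, ⟨?_, ?_, n₁, n₂, i, j, ?_, ?_, hn₂CL, ?_, ?_⟩, ?_⟩
  · -- nonzero
    intro h
    have : w' = n₂ := by
      have := sub_eq_zero.mp h
      exact this
    rw [this] at hn₂lt
    omega
  · -- in C
    have := C.neg_mem hn₂C
    rwa [neg_sub] at this
  · -- decomposition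
    rw [hn₁e]
  · -- standard form
    rw [hn₁e]
    have hei : e i = b j := by
      rw [hedef, eGen, Pi.single_eq_same, hβ j]
    have hw'i : w' i = y i := by
      simp [hw'def, hyTdef, hiT]
    have hn₁i : n₁ i = y i - b j := by
      rw [hn₁def, Pi.sub_apply, hei, hw'i]
    have hreprn₁ : b.repr (n₁ i) j = b.repr (y i) j - 1 := by
      rw [hn₁i, map_sub, Finsupp.sub_apply, b.repr_self j, Finsupp.single_eq_same]
    rw [hw'i, hreprn₁]
    exact zmod_val_succ hj
  · -- dHSet (CL C) n₁ ≤ 1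
    have hmem : dH n₁ w'' ∈ (dH n₁) '' (CL C) := ⟨w'', hw'', rfl⟩
    refine le_trans (Nat.sInf_le hmem) ?_
    unfold dH
    refine hw_le_one_of (i := i) (fun k hk => ?_)
    have hek : e k = 0 := by
      rw [hedef, eGen]
      exact Pi.single_eq_of_ne hk _
    have : w' k = w'' k := by
      simp [hw'def, hw''def, hyTdef, Finset.mem_erase, hk]
    simp [hn₁def, Pi.sub_apply, hek, this]
  · -- dHSet (CL C) (n₁ + e) ≤ 1
    rw [hn₁e]
    have hmem : dH w' w'' ∈ (dH w') '' (CL C) := ⟨w'', hw'', rfl⟩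
    refine le_trans (Nat.sInf_le hmem) ?_
    unfold dH
    refine hw_le_one_of (i := i) (fun k hk => ?_)
    have : w' k = w'' k := by
      simp [hw'def, hw''def, hyTdef, Finset.mem_erase, hk]
    simp [Pi.sub_apply, this]
  · -- weight decreases
    have hsplit : y - (w' - n₂) = (y - w') + n₂ := by abel
    have hA : hw y = hw (y - w') + hw w' := by
      unfold hw
      have hfw' : (Finset.univ.filter fun k => w' k ≠ 0) = T := by
        ext k
        simp only [Finset.mem_filter, Finset.mem_univ, true_and, hw'def, hyTdef]
        constructor
        · intro h
          by_contra hk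
          exact h (if_neg hk)
        · intro hk
          rw [if_pos hk]
          exact hyi k hk
      have hfy' : (Finset.univ.filter fun k => (y - w') k ≠ 0) =
          (Finset.univ.filter fun k => y k ≠ 0) \ T := by
        ext k
        simp only [Finset.mem_filter, Finset.mem_univ, true_and, Finset.mem_sdiff,
          Pi.sub_apply, hw'def, hyTdef]
        by_cases hk : k ∈ T
        · simp [hk]
        · simp [hk]
      have hTsub : T ⊆ Finset.univ.filter fun k => y k ≠ 0 := by
        intro k hk
        simp only [Finset.mem_filter, Finset.mem_univ, true_and]
        exact hyi k hk
      rw [hfw', hfy', Finset.card_sdiff_add_card_eq_card hTsub]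
    rw [hsplit]
    calc hw ((y - w') + n₂) ≤ hw (y - w') + hw n₂ := hw_add_le _ _
      _ < hw (y - w') + hw w' := by omega
      _ = hw y := hA.symm
end

section
/- If w is a leader codeword of a linear code C, then X(D(0)) ∩ (D(w) ∪ X(D(w))) ≠ ∅, i.e., there is a word at Hamming distance 1 from the set of coset leaders which lies in the Voronoi region of w or at Hamming distance 1 from it. -/
open Finset Set

variable {p m n : ℕ} [Fact p.Prime] {K : Type} [Field K] [Fintype K] [DecidableEq K]
  [Algebra (ZMod p) K]

/-! ### Auxiliary lemmas for STATEMENT 9 -/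

lemma hw_split (x : Fin n → K) (i : Fin n) :
    hw x = (((Finset.univ : Finset (Fin n)).erase i).filter fun k => x k ≠ 0).card
      + if x i ≠ 0 then 1 else 0 := by
  unfold hw
  rw [Finset.card_filter, Finset.card_filter,
    ← Finset.sum_erase_add _ _ (Finset.mem_univ i)]

lemma erase_filter_congr {x y : Fin n → K} (i : Fin n) (h : ∀ k, k ≠ i → x k = y k) :
    (((Finset.univ : Finset (Fin n)).erase i).filter fun k => x k ≠ 0)
      = ((Finset.univ.erase i).filter fun k => y k ≠ 0) := by
  apply Finset.filter_congr
  intro k hk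
  rw [h k (Finset.ne_of_mem_erase hk)]

lemma hw_eq_zero_iff {x : Fin n → K} : hw x = 0 ↔ x = 0 := by
  unfold hw
  rw [Finset.card_eq_zero, Finset.filter_eq_empty_iff]
  constructor
  · intro h
    funext k
    have := h (Finset.mem_univ k)
    simpa using this
  · intro h k _
    rw [h]
    simp

lemma dH_eq_zero {x y : Fin n → K} (h : dH x y = 0) : x = y := by
  have := hw_eq_zero_iff.mp h
  exact sub_eq_zero.mp this

lemma dHSet_le {A : Set (Fin n → K)} {y a : Fin n → K} (ha : a ∈ A) :
    dHSet A y ≤ dH y a :=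
  Nat.sInf_le ⟨a, ha, rfl⟩

lemma dHSet_exists {A : Set (Fin n → K)} (hA : A.Nonempty) (y : Fin n → K) :
    ∃ a ∈ A, dH y a = dHSet A y := by
  obtain ⟨a, ha, h⟩ := Nat.sInf_mem (hA.image (dH y))
  exact ⟨a, ha, h⟩

lemma dHSet_ne_zero {A : Set (Fin n → K)} (hA : A.Nonempty) {y : Fin n → K}
    (hy : y ∉ A) : dHSet A y ≠ 0 := by
  intro h0
  obtain ⟨a, ha, hda⟩ := dHSet_exists hA y
  rw [h0] at hda
  rw [← dH_eq_zero hda] at ha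
  exact hy ha

lemma zero_mem_CL (C : Submodule K (Fin n → K)) : (0 : Fin n → K) ∈ CL C := by
  intro c _
  have h0 : hw (0 : Fin n → K) = 0 := hw_eq_zero_iff.mpr rfl
  rw [h0]
  exact Nat.zero_le _

lemma VorD_zero (C : Submodule K (Fin n → K)) : VorD C 0 = CL C := by
  ext y
  constructor
  · intro h c hc
    have h2 := h (-c) (neg_mem hc)
    show hw y ≤ hw (y + c)
    have e1 : y - (0 : Fin n → K) = y := sub_zero y
    have e2 : y - (-c) = y + c := sub_neg_eq_add y c
    simpa [dH, e1, e2] using h2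
  · intro h c hc
    have h2 := h (-c) (neg_mem hc)
    show hw (y - 0) ≤ hw (y - c)
    rw [sub_zero, sub_eq_add_neg]
    exact h2

lemma mem_VorD (C : Submodule K (Fin n → K)) {w y : Fin n → K} (hwC : w ∈ C) :
    y ∈ VorD C w ↔ y - w ∈ CL C := by
  constructor
  · intro h c hc
    have h2 := h (w - c) (sub_mem hwC hc)
    have e1 : y - (w - c) = y - w + c := by abel
    show hw (y - w) ≤ hw (y - w + c)
    rw [← e1]
    exact h2
  · intro h c' hc'
    have h2 := h (w - c') (sub_mem hwC hc')
    have e1 : y - w + (w - c') = y - c' := by abel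
    show hw (y - w) ≤ hw (y - c')
    rw [← e1]
    exact h2

lemma exists_nonleader_nbr (C : Submodule K (Fin n → K)) {v w : Fin n → K}
    (hv : v ∈ CL C) (hn : v - w ∈ CL C) (hwC : w ∈ C) (hw0 : w ≠ 0) :
    ∃ y, dH y v = 1 ∧ y ∉ CL C := by
  by_contra hcon
  push_neg at hcon
  have hvn : hw v = hw (v - w) := by
    have h1 : hw v ≤ hw (v + -w) := hv (-w) (neg_mem hwC)
    have h2 : hw (v - w) ≤ hw (v - w + w) := hn w hwC
    rw [sub_add_cancel] at h2
    rw [← sub_eq_add_neg] at h1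
    omega
  have hA : ∀ i, w i ≠ 0 → v i = w i := by
    intro i hwi
    by_contra hne
    set y := Function.update v i (w i) with hy
    have hyi : y i = w i := Function.update_self i (w i) v
    have hyk : ∀ k, k ≠ i → y k = v k := fun k hk => Function.update_of_ne hk (w i) v
    have hyv : dH y v = 1 := by
      show hw (y - v) = 1
      rw [hw_split (y - v) i]
      have h0 : (((Finset.univ : Finset (Fin n)).erase i).filter
          fun k => (y - v) k ≠ 0) = ∅ := by
        apply Finset.filter_eq_empty_iff.mpr
        intro k hk
        have hki : k ≠ i := Finset.ne_of_mem_erase hk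
        simp [Pi.sub_apply, hyk k hki]
      have hii : (y - v) i ≠ 0 := by
        simp only [Pi.sub_apply, hyi]
        exact sub_ne_zero.mpr (fun h => hne h.symm)
      rw [h0, if_pos hii]
      simp
    have hyCL := hcon y hyv
    have h1 : hw y ≤ hw (y - w) := by
      have := hyCL (-w) (neg_mem hwC)
      rwa [← sub_eq_add_neg] at this
    have hEq1 := hw_split y i
    have hEq2 := hw_split v i
    have hEq3 := hw_split (y - w) i
    have hEq4 := hw_split (v - w) i
    have e12 := erase_filter_congr (x := y) (y := v) i hyk
    have e34 := erase_filter_congr (x := y - w) (y := v - w) i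
      (fun k hk => by simp [Pi.sub_apply, hyk k hk])
    have hyine : y i ≠ 0 := by rw [hyi]; exact hwi
    have hywi : ¬ ((y - w) i ≠ 0) := by simp [Pi.sub_apply, hyi]
    have hvwi : (v - w) i ≠ 0 := sub_ne_zero.mpr hne
    rw [e12, if_pos hyine] at hEq1
    rw [e34, if_neg hywi] at hEq3
    rw [if_pos hvwi] at hEq4
    have hite : (if v i ≠ 0 then 1 else 0) ≤ 1 := by split <;> omega
    omega
  have hdisj : Disjoint (Finset.univ.filter fun i => (v - w) i ≠ 0)
      (Finset.univ.filter fun i => w i ≠ 0) := by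
    rw [Finset.disjoint_left]
    intro i h1 h2
    rw [Finset.mem_filter] at h1 h2
    exact h1.2 (by simp [Pi.sub_apply, hA i h2.2])
  have hcard : hw v = hw (v - w) + hw w := by
    unfold hw
    rw [← Finset.card_union_of_disjoint hdisj]
    congr 1
    rw [← Finset.filter_or]
    apply Finset.filter_congr
    intro i _
    by_cases hwi : w i = 0
    · simp [Pi.sub_apply, hwi]
    · simp [Pi.sub_apply, hA i hwi, hwi]
  have hww : hw w = 0 := by omega
  exact hw0 (hw_eq_zero_iff.mp hww)

theorem stmt9 (C : Submodule K (Fin n → K)) (b : Module.Basis (Fin m) (ZMod p) K) (β : K)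
    (hβ : ∀ j : Fin m, b j = β ^ (j : ℕ))
    (w : Fin n → K) (hw' : isLeaderCodeword C b β w) :
    (XB (VorD C 0) ∩ (VorD C w ∪ XB (VorD C w))).Nonempty := by
  obtain ⟨hw0, hwC, n₁, n₂, i, j, hweq, -, hn₂, -, hd2⟩ := hw'
  set v : Fin n → K := n₁ + eGen β i j with hv
  have hvw : v - w = n₂ := by rw [hweq]; abel
  have hn₂' : v - w ∈ CL C := by rw [hvw]; exact hn₂
  have hvVor : v ∈ VorD C w := (mem_VorD C hwC).mpr hn₂'
  have hCLne : (CL C).Nonempty := ⟨0, zero_mem_CL C⟩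
  by_cases hvCL : v ∈ CL C
  · obtain ⟨y, hy1, hyCL⟩ := exists_nonleader_nbr C hvCL hn₂' hwC hw0
    have hle : dHSet (CL C) y ≤ 1 := le_trans (dHSet_le hvCL) (le_of_eq hy1)
    have hne0 : dHSet (CL C) y ≠ 0 := dHSet_ne_zero hCLne hyCL
    have hXB : y ∈ XB (VorD C 0) := by
      show dHSet (VorD C 0) y = 1
      rw [VorD_zero]
      omega
    have hle2 : dHSet (VorD C w) y ≤ 1 := le_trans (dHSet_le hvVor) (le_of_eq hy1)
    by_cases hyV : y ∈ VorD C w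
    · exact ⟨y, hXB, Or.inl hyV⟩
    · refine ⟨y, hXB, Or.inr ?_⟩
      have hne0' : dHSet (VorD C w) y ≠ 0 := dHSet_ne_zero ⟨v, hvVor⟩ hyV
      show dHSet (VorD C w) y = 1
      omega
  · refine ⟨v, ?_, Or.inl hvVor⟩
    show dHSet (VorD C 0) v = 1
    rw [VorD_zero]
    have hne0 : dHSet (CL C) v ≠ 0 := dHSet_ne_zero hCLne hvCL
    omega
end

section
/- Every leader codeword of a linear code C is a zero neighbour: its Voronoi region shares a common boundary with the Voronoi region of the zero codeword. -/
set_option linter.unusedSectionVars false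


open Finset Set

variable {p m n : ℕ} [Fact p.Prime] {K : Type} [Field K] [Fintype K] [DecidableEq K]
  [Algebra (ZMod p) K]

lemma hw_eq_zero {v : Fin n → K} (h : hw v = 0) : v = 0 := by
  funext i
  have := Finset.card_eq_zero.mp h
  by_contra hi
  simp only [Pi.zero_apply] at hi
  have : i ∈ (Finset.univ.filter fun i => v i ≠ 0) := by simp [hi]
  simp_all

lemma dH_card (x y : Fin n → K) : dH x y = (Finset.univ.filter fun i => x i ≠ y i).card := by
  unfold dH hw
  congr 1
  apply Finset.filter_congr
  intro i _
  simp [sub_ne_zero]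

lemma dH_symm (x y : Fin n → K) : dH x y = dH y x := by
  rw [dH_card, dH_card]
  congr 1
  apply Finset.filter_congr
  intro i _
  simp [ne_comm]

lemma dH_triangle (x y z : Fin n → K) : dH x z ≤ dH x y + dH y z := by
  rw [dH_card, dH_card, dH_card]
  refine le_trans (Finset.card_le_card ?_) (Finset.card_union_le _ _)
  intro i hi
  simp only [Finset.mem_filter, Finset.mem_union, Finset.mem_univ, true_and] at *
  by_contra h
  push_neg at h
  exact hi (h.1.trans h.2)

lemma dH_update_self (a : Fin n → K) (k : Fin n) (c : K) (h : a k ≠ c) :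
    dH a (Function.update a k c) = 1 := by
  rw [dH_card]
  have : (Finset.univ.filter fun i => a i ≠ Function.update a k c i) = {k} := by
    ext i
    by_cases hik : i = k <;> simp [Function.update_apply, hik, h]
  rw [this, Finset.card_singleton]

lemma hw_update_zero (a : Fin n → K) (k : Fin n) (h : a k ≠ 0) :
    hw (Function.update a k 0) + 1 = hw a := by
  unfold hw
  have he : (Finset.univ.filter fun i => Function.update a k 0 i ≠ 0)
      = (Finset.univ.filter fun i => a i ≠ 0).erase k := by
    ext i
    by_cases hik : i = k <;> simp [Function.update_apply, hik]
  rw [he, Finset.card_erase_add_one (by simp [h])]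

lemma hw_update_ge (a : Fin n → K) (k : Fin n) {c : K} (hc : c ≠ 0) :
    hw a ≤ hw (Function.update a k c) := by
  unfold hw
  have he : (Finset.univ.filter fun i => Function.update a k c i ≠ 0)
      = insert k ((Finset.univ.filter fun i => a i ≠ 0).erase k) := by
    ext i
    by_cases hik : i = k <;> simp [Function.update_apply, hik, hc]
  rw [he, Finset.card_insert_of_notMem (Finset.notMem_erase _ _)]
  by_cases hk : k ∈ (Finset.univ.filter fun i => a i ≠ 0)
  · rw [Finset.card_erase_of_mem hk]
    have := Finset.card_pos.mpr ⟨k, hk⟩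
    omega
  · rw [Finset.erase_eq_of_notMem hk]; omega

lemma dH_update_toward (a w : Fin n → K) (k : Fin n) (h : a k ≠ w k) :
    dH (Function.update a k (w k)) w + 1 = dH a w := by
  rw [dH_card, dH_card]
  have he : (Finset.univ.filter fun i => Function.update a k (w k) i ≠ w i)
      = (Finset.univ.filter fun i => a i ≠ w i).erase k := by
    ext i
    by_cases hik : i = k <;> simp [Function.update_apply, hik]
  rw [he, Finset.card_erase_add_one (by simp [h])]

lemma exists_k (a w : Fin n → K) (h : dH a w = hw a) (hw0 : w ≠ 0) :
    ∃ k, w k ≠ 0 ∧ a k ≠ w k := by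
  by_contra h'
  push_neg at h'
  obtain ⟨k₀, hk₀⟩ := Function.ne_iff.mp hw0
  simp only [Pi.zero_apply] at hk₀
  have hsub : (Finset.univ.filter fun i => a i ≠ w i) ⊂ (Finset.univ.filter fun i => a i ≠ 0) := by
    constructor
    · intro i hi
      simp only [Finset.mem_filter, Finset.mem_univ, true_and] at *
      intro ha0
      have hwi : w i = 0 := by
        by_contra hwi
        exact hi (h' i hwi)
      rw [ha0, hwi] at hi
      exact hi rfl
    · intro hcon
      have hk₀mem : k₀ ∈ (Finset.univ.filter fun i => a i ≠ 0) := by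
        simp [h' k₀ hk₀ ▸ hk₀, (h' k₀ hk₀).symm ▸ hk₀]
      have := hcon hk₀mem
      simp only [Finset.mem_filter, Finset.mem_univ, true_and] at this
      exact this (h' k₀ hk₀)
  have := Finset.card_lt_card hsub
  rw [← dH_card, h] at this
  unfold hw at this
  omega

lemma crossing (A : Set (Fin n → K)) {x y : Fin n → K} (hxy : dH x y = 1)
    (hx : x ∈ A) (hy : y ∉ A) : x ∈ bdry A ∧ y ∈ bdry A := by
  constructor
  · right
    show dHSet Aᶜ x = 1
    have h1 : (1 : ℕ) ∈ dH x '' Aᶜ := ⟨y, hy, hxy⟩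
    have hle := Nat.sInf_le h1
    obtain ⟨z, hz, hdz⟩ := Nat.sInf_mem (⟨1, h1⟩ : (dH x '' Aᶜ).Nonempty)
    have hne : sInf (dH x '' Aᶜ) ≠ 0 := by
      intro h0
      rw [h0] at hdz
      exact hz (dH_eq_zero hdz ▸ hx)
    show sInf (dH x '' Aᶜ) = 1
    omega
  · left
    show dHSet A y = 1
    have h1 : (1 : ℕ) ∈ dH y '' A := ⟨x, hx, by rw [dH_symm]; exact hxy⟩
    have hle := Nat.sInf_le h1
    obtain ⟨z, hz, hdz⟩ := Nat.sInf_mem (⟨1, h1⟩ : (dH y '' A).Nonempty)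
    have hne : sInf (dH y '' A) ≠ 0 := by
      intro h0
      rw [h0] at hdz
      exact hy (dH_eq_zero hdz ▸ hz)
    show sInf (dH y '' A) = 1
    omega

lemma lemA (C : Submodule K (Fin n → K)) (w : Fin n → K) (hwC : w ∈ C) (hw0 : w ≠ 0) :
    ∀ s a, hw a ≤ s → a ∈ VorD C w → a ∈ VorD C 0 →
      (bdry (VorD C w) ∩ bdry (VorD C 0)).Nonempty := by
  intro s
  induction s with
  | zero =>
    intro a hs haw _
    exfalso
    have ha : a = 0 := hw_eq_zero (Nat.le_zero.mp hs)
    have h1 : dH a w ≤ dH a 0 := haw 0 C.zero_mem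
    have h2 : dH a 0 = hw a := by rw [dH, sub_zero]
    have h3 : dH a w = 0 := by omega
    exact hw0 (by rw [← dH_eq_zero h3, ha])
  | succ s ih =>
    intro a hs haw ha0
    have hda0 : dH a 0 = hw a := by rw [dH, sub_zero]
    by_cases h00 : hw a = 0
    · exfalso
      have ha : a = 0 := hw_eq_zero h00
      have h1 : dH a w ≤ dH a 0 := haw 0 C.zero_mem
      rw [hda0, h00] at h1
      exact hw0 (by rw [← dH_eq_zero (Nat.le_zero.mp h1), ha])
    -- equidistance
    have hd_eq : dH a w = hw a := by
      have h1 : dH a w ≤ dH a 0 := haw 0 C.zero_mem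
      have h2 : dH a 0 ≤ dH a w := ha0 w hwC
      omega
    obtain ⟨k₁, hwk₁, hak₁⟩ := exists_k a w hd_eq hw0
    set u := Function.update a k₁ (w k₁) with hu
    have hdau : dH a u = 1 := dH_update_self a k₁ _ hak₁
    have huD0 : u ∉ VorD C 0 := by
      intro hmem
      have h1 : dH u 0 ≤ dH u w := hmem w hwC
      have h2 : dH u 0 = hw u := by rw [dH, sub_zero]
      have h3 : hw a ≤ hw u := hw_update_ge a k₁ hwk₁
      have h4 : dH u w + 1 = dH a w := dH_update_toward a w k₁ hak₁
      omega
    have habd0 : a ∈ bdry (VorD C 0) := (crossing _ hdau ha0 huD0).1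
    -- pick k₂ with a k₂ ≠ 0
    have : ∃ k₂, a k₂ ≠ 0 := by
      by_contra hcon
      push_neg at hcon
      exact h00 (by rw [show a = 0 from funext hcon]; simp [hw])
    obtain ⟨k₂, hk₂⟩ := this
    set a' := Function.update a k₂ 0 with ha'
    have hdaa' : dH a a' = 1 := dH_update_self a k₂ 0 hk₂
    have hwa' : hw a' + 1 = hw a := hw_update_zero a k₂ hk₂
    have ha'0 : a' ∈ VorD C 0 := by
      intro c' hc'
      have h1 : dH a' 0 = hw a' := by rw [dH, sub_zero]
      have h2 : dH a c' ≤ dH a a' + dH a' c' := dH_triangle a a' c'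
      have h3 : dH a 0 ≤ dH a c' := ha0 c' hc'
      omega
    by_cases ha'w : a' ∈ VorD C w
    · exact ih a' (by omega) ha'w ha'0
    · exact ⟨a, (crossing _ hdaa' haw ha'w).1, habd0⟩


/-- every leader codeword is a zero neighbour. -/
theorem stmt11 (C : Submodule K (Fin n → K)) (b : Module.Basis (Fin m) (ZMod p) K) (β : K)
    (hβ : ∀ j : Fin m, b j = β ^ (j : ℕ))
    (w : Fin n → K) (hw' : isLeaderCodeword C b β w) :
    (bdry (VorD C w) ∩ bdry (VorD C 0)).Nonempty := by
  obtain ⟨hw0, hwC, n₁, n₂, i, j, hweq, -, hn₂, -, h₂⟩ := hw'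
  set v := n₁ + eGen β i j with hv
  have hvw : v - w = n₂ := by rw [hweq]; abel
  have hvDw : v ∈ VorD C w := by
    intro c' hc'
    have h2 : v - c' = n₂ + (w - c') := by rw [← hvw]; abel
    show hw (v - w) ≤ hw (v - c')
    rw [hvw, h2]
    exact hn₂ (w - c') (C.sub_mem hwC hc')
  have h0CL : (0 : Fin n → K) ∈ CL C := by
    intro c hc
    simp [hw]
  have hne : (dH v '' CL C).Nonempty := ⟨dH v 0, 0, h0CL, rfl⟩
  obtain ⟨ℓ, hℓCL, hdℓ⟩ := Nat.sInf_mem hne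
  have hdle : dH v ℓ ≤ 1 := by rw [hdℓ]; exact h₂
  have hℓD0 : ℓ ∈ VorD C 0 := by
    intro c' hc'
    show hw (ℓ - 0) ≤ hw (ℓ - c')
    rw [sub_zero, show ℓ - c' = ℓ + (-c') by abel]
    exact hℓCL (-c') (neg_mem hc')
  by_cases hvD0 : v ∈ VorD C 0
  · exact lemA C w hwC hw0 (hw v) v le_rfl hvDw hvD0
  by_cases hℓDw : ℓ ∈ VorD C w
  · exact lemA C w hwC hw0 (hw ℓ) ℓ le_rfl hℓDw hℓD0
  have h1 : dH v ℓ = 1 := by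
    rcases Nat.le_one_iff_eq_zero_or_eq_one.mp hdle with h | h
    · exact absurd (by rw [dH_eq_zero h]; exact hℓD0) hvD0
    · exact h
  exact ⟨v, (crossing _ h1 hvDw hℓDw).1,
    (crossing _ (by rw [dH_symm]; exact h1) hℓD0 hvD0).2⟩
end

section
/- Let C be a linear code, ≺ a weight compatible order, and c a nonzero codeword. A larger half of c is a ≺-minimal word u with u − c ≺ u. Every larger half u of c satisfies w_H(c) ≤ 2·w_H(u) ≤ w_H(c) + 2. -/
open Finset Set

variable {p m n : ℕ} [Fact p.Prime] {K : Type} [Field K] [Fintype K] [DecidableEq K]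
  [Algebra (ZMod p) K]

/-- weight of a larger half. -/
theorem stmt15 (C : Submodule K (Fin n → K)) (r : (Fin n → K) → (Fin n → K) → Prop)
    (hso : IsStrictTotalOrder (Fin n → K) r)
    (hwt : ∀ x y : Fin n → K, hw x < hw y → r x y)
    (c u : Fin n → K) (hc : c ∈ C) (hc0 : c ≠ 0)
    (hu : isLargerHalf r c u) :
    hw c ≤ 2 * hw u ∧ 2 * hw u ≤ hw c + 2 := by
  obtain ⟨hr, hmin⟩ := hu
  have asymm : ∀ x y : Fin n → K, r x y → r y x → False := fun x y h1 h2 =>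
    hso.irrefl x (hso.trans _ _ _ h1 h2)
  have h1 : hw (u - c) ≤ hw u := by
    by_contra h
    exact asymm _ _ hr (hwt _ _ (lt_of_not_ge h))
  have hcpos : 1 ≤ hw c := by
    have : ∃ i, c i ≠ 0 := by
      by_contra h; push_neg at h; exact hc0 (funext h)
    obtain ⟨i, hi⟩ := this
    exact Finset.card_pos.mpr ⟨i, by simp [hw, hi]⟩
  have hsub : hw c ≤ hw u + hw (u - c) := by
    have hss : (Finset.univ.filter fun i => c i ≠ 0) ⊆
        (Finset.univ.filter fun i => u i ≠ 0) ∪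
        (Finset.univ.filter fun i => (u - c) i ≠ 0) := by
      intro i hi
      simp only [Finset.mem_filter, Finset.mem_union, Finset.mem_univ, true_and,
        Pi.sub_apply] at *
      by_contra h
      push_neg at h
      obtain ⟨ha, hb⟩ := h
      rw [ha, zero_sub, neg_eq_zero] at hb
      exact hi hb
    calc hw c ≤ _ := Finset.card_le_card hss
      _ ≤ hw u + hw (u - c) := Finset.card_union_le _ _
  refine ⟨le_trans hsub (by omega), ?_⟩
  -- construct a candidate larger half of weight hw c / 2 + 1
  set k := hw c / 2 + 1 with hk
  have hkle : k ≤ hw c := by omega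
  obtain ⟨T, hTs, hTcard⟩ :=
    Finset.exists_subset_card_eq (s := Finset.univ.filter fun i => c i ≠ 0) hkle
  set u' : Fin n → K := fun i => if i ∈ T then c i else 0 with hu'
  have hwu' : hw u' = k := by
    have hT : (Finset.univ.filter fun i => u' i ≠ 0) = T := by
      ext i
      simp only [Finset.mem_filter, Finset.mem_univ, true_and, hu']
      constructor
      · intro h
        by_contra hT
        simp [hT] at h
      · intro h
        have := hTs h
        simp only [Finset.mem_filter, Finset.mem_univ, true_and] at this
        simp [h, this]
    rw [hw, hT, hTcard]
  have hwuc : hw (u' - c) = hw c - k := by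
    have heq : (Finset.univ.filter fun i => (u' - c) i ≠ 0) =
        (Finset.univ.filter fun i => c i ≠ 0) \ T := by
      ext i
      simp only [Finset.mem_filter, Finset.mem_univ, true_and, Finset.mem_sdiff,
        Pi.sub_apply, hu']
      by_cases hT : i ∈ T
      · have := hTs hT
        simp only [Finset.mem_filter, Finset.mem_univ, true_and] at this
        simp [hT]
      · simp [hT, sub_eq_zero]
    rw [hw, heq, Finset.card_sdiff_of_subset hTs, hTcard]
    rfl
  have hru' : r (u' - c) u' := by
    apply hwt
    rw [hwu', hwuc]
    omega
  have hnot : ¬ r u' u := hmin u' hru'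
  have hle : hw u ≤ k := by
    by_contra h
    push_neg at h
    exact hnot (hwt _ _ (by omega))
  omega
end
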